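/- Let n = 2^t and let n_1, …, n_k be positive integers with n_1 + ⋯ + n_k = n; let P_1, …, P_k be the consecutive intervals partitioning {0,…,n−1} with |P_i| = n_i. Call a dyadic interval D_{s,j} = {j·2^s, …, (j+1)·2^s − 1} (for 0 ≤ s ≤ t and 0 ≤ j < 2^{t−s}) active if it is not contained in any single part P_i. Then the sum, over all active dyadic intervals D, of |D| is at most 8 · Σ_{i=1}^k n_i · (log₂(n/n_i) + 1). -/

import Mathlib

/-- The offset of the `i`-th consecutive interval: the sum of the sizes of the
preceding parts. -/
def intervalOffset {k : ℕ} (nseq : Fin k → ℕ) (i : Fin k) : ℕ :=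
  ∑ l ∈ Finset.univ.filter (fun l : Fin k => l < i), nseq l

set_option maxRecDepth 4000

lemma offset_add {k : ℕ} (nseq : Fin k → ℕ) (i : Fin k) :
    intervalOffset nseq i + nseq i =
      ∑ l ∈ Finset.univ.filter (fun l : Fin k => l ≤ i), nseq l := by
  rw [intervalOffset]
  have : Finset.univ.filter (fun l : Fin k => l ≤ i)
      = insert i (Finset.univ.filter (fun l : Fin k => l < i)) := by
    ext l
    simp only [Finset.mem_filter, Finset.mem_univ, true_and, Finset.mem_insert,
      Fin.lt_def, Fin.le_def, Fin.ext_iff]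
    omega
  rw [this, Finset.sum_insert (by simp), add_comm]

lemma offset_cover {k n : ℕ} (nseq : Fin k → ℕ) (hsum : ∑ i, nseq i = n)
    (x : ℕ) (hx : x < n) :
    ∃ i, intervalOffset nseq i ≤ x ∧ x < intervalOffset nseq i + nseq i := by
  have hk : 0 < k := by
    rcases Nat.eq_zero_or_pos k with h | h
    · subst h; simp at hsum; omega
    · exact h
  set S := Finset.univ.filter (fun i : Fin k => intervalOffset nseq i ≤ x) with hS
  have hne : S.Nonempty := by
    refine ⟨⟨0, hk⟩, ?_⟩
    simp [hS, intervalOffset]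
    have : Finset.univ.filter (fun l : Fin k => l < ⟨0, hk⟩) = ∅ := by
      ext l; simp [Fin.lt_def]
    exact Finset.mem_filter.mpr ⟨Finset.mem_univ _, by rw [this]; simp⟩
  set i := S.max' hne with hi
  have hmem : i ∈ S := S.max'_mem hne
  have hle : intervalOffset nseq i ≤ x := by
    simpa [hS] using hmem
  refine ⟨i, hle, ?_⟩
  by_contra hcon
  push_neg at hcon
  by_cases hlast : (i : ℕ) + 1 < k
  · set i' : Fin k := ⟨(i : ℕ) + 1, hlast⟩ with hi'
    have heq : intervalOffset nseq i' = intervalOffset nseq i + nseq i := by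
      rw [offset_add, intervalOffset]
      congr 1
      ext l
      simp only [Finset.mem_filter, Finset.mem_univ, true_and, Fin.lt_def, Fin.le_def, hi']
      omega
    have : i' ∈ S := by
      simp only [hS, Finset.mem_filter, Finset.mem_univ, true_and]
      omega
    have hle' := S.le_max' i' this
    rw [← hi] at hle'
    have : (i' : ℕ) ≤ (i : ℕ) := hle'
    simp only [hi'] at this
    omega
  · have : Finset.univ.filter (fun l : Fin k => l ≤ i) = Finset.univ := by
      apply Finset.filter_true_of_mem
      intro l _
      rw [Fin.le_def]
      have h1 := l.isLt
      omega
    have h2 : intervalOffset nseq i + nseq i = n := by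
      rw [offset_add, this, hsum]
    omega

lemma offset_lt_le {k : ℕ} (nseq : Fin k → ℕ) {i i' : Fin k} (h : i < i') :
    intervalOffset nseq i + nseq i ≤ intervalOffset nseq i' := by
  rw [offset_add, intervalOffset]
  apply Finset.sum_le_sum_of_subset
  intro l
  simp only [Finset.mem_filter, Finset.mem_univ, true_and]
  intro hl
  exact lt_of_le_of_lt hl h

lemma parts_disjoint {k : ℕ} (nseq : Fin k → ℕ) {i i' : Fin k} (h : i ≠ i') :
    Disjoint (Finset.Ico (intervalOffset nseq i) (intervalOffset nseq i + nseq i))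
      (Finset.Ico (intervalOffset nseq i') (intervalOffset nseq i' + nseq i')) := by
  rw [Finset.disjoint_left]
  intro x hx hx'
  simp only [Finset.mem_Ico] at hx hx'
  rcases lt_or_gt_of_ne h with hlt | hlt
  · have := offset_lt_le nseq hlt; omega
  · have := offset_lt_le nseq hlt; omega

lemma card_part {k n : ℕ} (nseq : Fin k → ℕ) (hsum : ∑ i, nseq i = n)
    (A : Finset ℕ) (hA : A ⊆ Finset.Ico 0 n) :
    A.card = ∑ i, (A ∩ Finset.Ico (intervalOffset nseq i)
      (intervalOffset nseq i + nseq i)).card := by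
  rw [← Finset.card_biUnion]
  · congr 1
    ext x
    simp only [Finset.mem_biUnion, Finset.mem_univ, true_and, Finset.mem_inter,
      Finset.mem_Ico]
    constructor
    · intro hx
      have hxn : x < n := by
        have := hA hx; simp only [Finset.mem_Ico] at this; omega
      obtain ⟨i, h1, h2⟩ := offset_cover nseq hsum x hxn
      exact ⟨i, hx, h1, h2⟩
    · rintro ⟨i, hx, -⟩; exact hx
  · intro i _ i' _ h
    exact Finset.disjoint_of_subset_left Finset.inter_subset_right
      (Finset.disjoint_of_subset_right Finset.inter_subset_right (parts_disjoint nseq h))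

lemma active_inner {t k : ℕ} (nseq : Fin k → ℕ) (s : ℕ) (i : Fin k) :
    ∑ j ∈ (Finset.range (2 ^ (t - s))).filter
        (fun j => ¬ ∃ i' : Fin k,
          Finset.Ico (j * 2 ^ s) ((j + 1) * 2 ^ s) ⊆
            Finset.Ico (intervalOffset nseq i') (intervalOffset nseq i' + nseq i')),
      (Finset.Ico (j * 2 ^ s) ((j + 1) * 2 ^ s) ∩
        Finset.Ico (intervalOffset nseq i) (intervalOffset nseq i + nseq i)).card
    ≤ min (nseq i) (2 ^ (s + 1)) := by
  set o := intervalOffset nseq i with ho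
  set m := nseq i with hm
  set F := (Finset.range (2 ^ (t - s))).filter
        (fun j => ¬ ∃ i' : Fin k,
          Finset.Ico (j * 2 ^ s) ((j + 1) * 2 ^ s) ⊆
            Finset.Ico (intervalOffset nseq i') (intervalOffset nseq i' + nseq i')) with hF
  have hdisj : ∀ j ∈ F, ∀ j' ∈ F, j ≠ j' →
      Disjoint (Finset.Ico (j * 2 ^ s) ((j + 1) * 2 ^ s) ∩ Finset.Ico o (o + m))
        (Finset.Ico (j' * 2 ^ s) ((j' + 1) * 2 ^ s) ∩ Finset.Ico o (o + m)) := by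
    intro j _ j' _ hne
    apply Finset.disjoint_of_subset_left Finset.inter_subset_left
    apply Finset.disjoint_of_subset_right Finset.inter_subset_left
    rw [Finset.disjoint_left]
    intro x hx hx'
    simp only [Finset.mem_Ico] at hx hx'
    rcases lt_or_gt_of_ne hne with h | h
    · have : (j + 1) * 2 ^ s ≤ j' * 2 ^ s := Nat.mul_le_mul_right _ (by omega)
      omega
    · have : (j' + 1) * 2 ^ s ≤ j * 2 ^ s := Nat.mul_le_mul_right _ (by omega)
      omega
  rw [← Finset.card_biUnion hdisj]
  apply le_min
  · apply le_trans (Finset.card_le_card (s := _) (t := Finset.Ico o (o + m)) ?_)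
    · rw [Nat.card_Ico]; omega
    · intro x hx
      simp only [Finset.mem_biUnion] at hx
      obtain ⟨j, _, hj⟩ := hx
      exact Finset.mem_of_mem_inter_right hj
  · apply le_trans (Finset.card_le_card
      (t := Finset.Ico o (o + 2 ^ s) ∪ Finset.Ico (o + m - 2 ^ s) (o + m)) ?_)
    · apply le_trans (Finset.card_union_le _ _)
      rw [Nat.card_Ico, Nat.card_Ico, pow_succ]
      omega
    · intro x hx
      simp only [Finset.mem_biUnion] at hx
      obtain ⟨j, hjF, hj⟩ := hx
      rw [hF, Finset.mem_filter] at hjF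
      obtain ⟨-, hact⟩ := hjF
      push_neg at hact
      have hns := hact i
      rw [← ho, ← hm, Finset.not_subset] at hns
      obtain ⟨y, hy, hyn⟩ := hns
      simp only [Finset.mem_inter, Finset.mem_Ico] at hj
      simp only [Finset.mem_Ico] at hy hyn
      simp only [Finset.mem_union, Finset.mem_Ico]
      have hab : (j + 1) * 2 ^ s = j * 2 ^ s + 2 ^ s := by ring
      rw [hab] at hj hy
      omega

lemma sum_two_pow (L : ℕ) : ∑ s ∈ Finset.range L, 2 ^ (s + 1) = 2 ^ (L + 1) - 2 := by
  induction L with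
  | zero => simp
  | succ L ih =>
    rw [Finset.sum_range_succ, ih, pow_succ, pow_succ]
    have : 2 ≤ 2 ^ (L + 1) := Nat.one_lt_two_pow (by omega)
    omega

lemma sum_min_le (t m : ℕ) (hm : 0 < m) (hmn : m ≤ 2 ^ t) :
    ∑ s ∈ Finset.range (t + 1), min m (2 ^ (s + 1)) ≤ m * (t - Nat.log 2 m + 3) := by
  set L := Nat.log 2 m with hL
  have hLt : L ≤ t := by
    have := Nat.log_mono_right (b := 2) hmn
    rwa [Nat.log_pow (by omega)] at this
  have hsplit : ∑ s ∈ Finset.range (t + 1), min m (2 ^ (s + 1)) =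
      (∑ s ∈ Finset.range L, min m (2 ^ (s + 1))) +
      (∑ s ∈ Finset.Ico L (t + 1), min m (2 ^ (s + 1))) := by
    rw [Finset.range_eq_Ico, Finset.range_eq_Ico]
    exact (Finset.sum_Ico_consecutive (fun s => min m (2 ^ (s + 1))) (Nat.zero_le L) (show L ≤ t + 1 by omega)).symm
  rw [hsplit]
  have h1 : ∑ s ∈ Finset.range L, min m (2 ^ (s + 1)) ≤ 2 * m := by
    calc ∑ s ∈ Finset.range L, min m (2 ^ (s + 1))
        ≤ ∑ s ∈ Finset.range L, 2 ^ (s + 1) :=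
          Finset.sum_le_sum (fun s _ => min_le_right _ _)
      _ = 2 ^ (L + 1) - 2 := sum_two_pow L
      _ ≤ 2 * 2 ^ L := by rw [pow_succ]; omega
      _ ≤ 2 * m := by
          have h3 := Nat.pow_log_le_self 2 (by omega : m ≠ 0)
          rw [← hL] at h3
          omega
  have h2 : ∑ s ∈ Finset.Ico L (t + 1), min m (2 ^ (s + 1)) ≤ (t + 1 - L) * m := by
    calc ∑ s ∈ Finset.Ico L (t + 1), min m (2 ^ (s + 1))
        ≤ ∑ _s ∈ Finset.Ico L (t + 1), m :=
          Finset.sum_le_sum (fun s _ => min_le_left _ _)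
      _ = (t + 1 - L) * m := by rw [Finset.sum_const, Nat.card_Ico, smul_eq_mul]
  have : (t + 1 - L) * m = (t - L + 1) * m := by
    congr 1; omega
  nlinarith [h1, h2]

/-- Charging bound for stable partition sort with exact median splitting:
with `n = 2^t` and `P_1, …, P_k` the consecutive intervals of sizes
`n_1, …, n_k` partitioning `{0,…,n-1}`, the total size of all dyadic intervals
`D_{s,j} = {j·2^s, …, (j+1)·2^s - 1}` that are not contained in any single
part `P_i` (the active ones) is at most `8 · Σ_i n_i (log₂(n/n_i) + 1)`. -/
theorem active_dyadic_sum_le {t k n : ℕ} (hn : n = 2 ^ t) (nseq : Fin k → ℕ)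
    (hpos : ∀ i, 0 < nseq i) (hsum : ∑ i, nseq i = n) :
    ((∑ s ∈ Finset.range (t + 1),
        ∑ j ∈ (Finset.range (2 ^ (t - s))).filter
          (fun j => ¬ ∃ i : Fin k,
            Finset.Ico (j * 2 ^ s) ((j + 1) * 2 ^ s) ⊆
              Finset.Ico (intervalOffset nseq i)
                (intervalOffset nseq i + nseq i)),
          2 ^ s : ℕ) : ℝ) ≤
      8 * ∑ i, (nseq i : ℝ) * (Real.logb 2 ((n : ℝ) / (nseq i : ℝ)) + 1) := by
  have hni_le : ∀ i, nseq i ≤ n := by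
    intro i
    rw [← hsum]
    exact Finset.single_le_sum (fun l _ => Nat.zero_le _) (Finset.mem_univ i)
  -- Nat-level bound
  have key : (∑ s ∈ Finset.range (t + 1),
        ∑ j ∈ (Finset.range (2 ^ (t - s))).filter
          (fun j => ¬ ∃ i : Fin k,
            Finset.Ico (j * 2 ^ s) ((j + 1) * 2 ^ s) ⊆
              Finset.Ico (intervalOffset nseq i)
                (intervalOffset nseq i + nseq i)),
          2 ^ s)
      ≤ ∑ i, nseq i * (t - Nat.log 2 (nseq i) + 3) := by
    have step1 : ∀ s ∈ Finset.range (t + 1),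
        (∑ j ∈ (Finset.range (2 ^ (t - s))).filter
          (fun j => ¬ ∃ i : Fin k,
            Finset.Ico (j * 2 ^ s) ((j + 1) * 2 ^ s) ⊆
              Finset.Ico (intervalOffset nseq i)
                (intervalOffset nseq i + nseq i)), (2 ^ s : ℕ))
        = ∑ i : Fin k, ∑ j ∈ (Finset.range (2 ^ (t - s))).filter
          (fun j => ¬ ∃ i : Fin k,
            Finset.Ico (j * 2 ^ s) ((j + 1) * 2 ^ s) ⊆
              Finset.Ico (intervalOffset nseq i)
                (intervalOffset nseq i + nseq i)),
            (Finset.Ico (j * 2 ^ s) ((j + 1) * 2 ^ s) ∩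
              Finset.Ico (intervalOffset nseq i)
                (intervalOffset nseq i + nseq i)).card := by
      intro s hs
      rw [Finset.sum_comm]
      apply Finset.sum_congr rfl
      intro j hj
      rw [Finset.mem_filter, Finset.mem_range] at hj
      have hsub : Finset.Ico (j * 2 ^ s) ((j + 1) * 2 ^ s) ⊆ Finset.Ico 0 n := by
        intro x hx
        rw [Finset.mem_Ico] at hx ⊢
        refine ⟨Nat.zero_le _, ?_⟩
        have h1 : (j + 1) * 2 ^ s ≤ 2 ^ (t - s) * 2 ^ s := Nat.mul_le_mul_right _ (by omega)
        have h2 : 2 ^ (t - s) * 2 ^ s = 2 ^ t := by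
          rw [← pow_add]
          congr 1
          rw [Finset.mem_range] at hs
          omega
        omega
      have := card_part nseq hsum _ hsub
      rw [Nat.card_Ico] at this
      rw [← this, (by ring : (j + 1) * 2 ^ s = j * 2 ^ s + 2 ^ s),
        Nat.add_sub_cancel_left]
    rw [Finset.sum_congr rfl step1, Finset.sum_comm]
    calc ∑ i : Fin k, ∑ s ∈ Finset.range (t + 1), ∑ j ∈ _, _
        ≤ ∑ i : Fin k, ∑ s ∈ Finset.range (t + 1), min (nseq i) (2 ^ (s + 1)) := by
          apply Finset.sum_le_sum
          intro i _
          apply Finset.sum_le_sum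
          intro s _
          exact active_inner nseq s i
      _ ≤ ∑ i, nseq i * (t - Nat.log 2 (nseq i) + 3) := by
          apply Finset.sum_le_sum
          intro i _
          exact sum_min_le t (nseq i) (hpos i) (hn ▸ hni_le i)
  -- pass to ℝ
  calc ((∑ s ∈ Finset.range (t + 1), ∑ j ∈ _, (2 ^ s : ℕ) : ℕ) : ℝ)
      ≤ ((∑ i, nseq i * (t - Nat.log 2 (nseq i) + 3) : ℕ) : ℝ) := by
        exact_mod_cast key
    _ = ∑ i, (nseq i : ℝ) * ((t : ℝ) - (Nat.log 2 (nseq i) : ℝ) + 3) := by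
        push_cast
        apply Finset.sum_congr rfl
        intro i _
        have hL : Nat.log 2 (nseq i) ≤ t := by
          have := Nat.log_mono_right (b := 2) (hn ▸ hni_le i)
          rwa [Nat.log_pow (by omega)] at this
        push_cast [Nat.cast_sub hL]
        ring
    _ ≤ 8 * ∑ i, (nseq i : ℝ) * (Real.logb 2 ((n : ℝ) / (nseq i : ℝ)) + 1) := by
        rw [Finset.mul_sum]
        apply Finset.sum_le_sum
        intro i _
        set L := Nat.log 2 (nseq i) with hLdef
        have hL : L ≤ t := by
          have := Nat.log_mono_right (b := 2) (hn ▸ hni_le i)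
          rwa [Nat.log_pow (by omega)] at this
        have hpos' : (0 : ℝ) < (nseq i : ℝ) := by exact_mod_cast hpos i
        have hnpos : (0 : ℝ) < (n : ℝ) := by
          have : 0 < n := by rw [hn]; positivity
          exact_mod_cast this
        have hlogb_div : Real.logb 2 ((n : ℝ) / (nseq i : ℝ)) =
            (t : ℝ) - Real.logb 2 (nseq i) := by
          rw [Real.logb_div (ne_of_gt hnpos) (ne_of_gt hpos')]
          congr 1
          rw [hn]
          push_cast
          rw [Real.logb_pow, Real.logb_self_eq_one (by norm_num : (1:ℝ) < 2)]
          ring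
        have hub : Real.logb 2 (nseq i) ≤ (L : ℝ) + 1 := by
          have h1 : (nseq i : ℝ) ≤ (2 : ℝ) ^ (L + 1) := by
            have := Nat.lt_pow_succ_log_self (by omega : 1 < 2) (nseq i)
            rw [← hLdef] at this
            exact_mod_cast this.le
          calc Real.logb 2 (nseq i) ≤ Real.logb 2 ((2 : ℝ) ^ (L + 1)) :=
                Real.logb_le_logb_of_le (by norm_num : (1:ℝ) < 2) hpos' h1
            _ = (L : ℝ) + 1 := by
                rw [Real.logb_pow, Real.logb_self_eq_one (by norm_num : (1:ℝ) < 2)]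
                push_cast; ring
        have hnonneg : 0 ≤ Real.logb 2 ((n : ℝ) / (nseq i : ℝ)) := by
          apply Real.logb_nonneg (by norm_num)
          rw [le_div_iff₀ hpos']
          have := hni_le i
          have : (nseq i : ℝ) ≤ (n : ℝ) := by exact_mod_cast this
          linarith
        rw [hlogb_div] at hnonneg ⊢
        have hLt : (L : ℝ) ≤ (t : ℝ) := by exact_mod_cast hL
        nlinarith [hpos', hub, hnonneg, hLt]
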